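/- Let p > 1, N > p + 4p/(p-1), set α = (1/p)(N - 2√((N-1)/(p-1)) - p - 2) > 0, m = ((p-1)N - 2√((p-1)(N-1)) - p + 2)/(N - 2√((N-1)/(p-1)) - p - 2), and λ* = (p/(m-(p-1)))^{p-1} (N - mp/(m-(p-1))). Then u(r) = r^{-α} - 1 solves the radial p-Laplace equation -(r^{N-1}|u_r|^{p-2}u_r)' = r^{N-1} λ* (1+u(r))^m for r ∈ (0,1), with u(1) = 0. -/

import Mathlib

open Real Set

/-- For `N > p + 4p/(p-1)`, with `α = (1/p)(N - 2√((N-1)/(p-1)) - p - 2)`,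
`m = ((p-1)N - 2√((p-1)(N-1)) - p + 2)/(N - 2√((N-1)/(p-1)) - p - 2)` and
`λ* = (p/(m-(p-1)))^{p-1}(N - mp/(m-(p-1)))`, the function `u(r) = r^{-α} - 1`
solves `-(r^{N-1}|u_r|^{p-2}u_r)' = r^{N-1} λ* (1+u)^m` on `(0,1)` with `u(1) = 0`.
Here `u_r(r) = -α r^{-α-1}`, so `-(r^{N-1}|u_r|^{p-2}u_r) = r^{N-1}(α r^{-α-1})^{p-1}`. -/
theorem power_extremal_solution
    (p N a m lam : ℝ) (hp : 1 < p) (hN : N > p + 4 * p / (p - 1))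
    (ha : a = (1 / p) * (N - 2 * Real.sqrt ((N - 1) / (p - 1)) - p - 2))
    (hm : m = ((p - 1) * N - 2 * Real.sqrt ((p - 1) * (N - 1)) - p + 2) /
      (N - 2 * Real.sqrt ((N - 1) / (p - 1)) - p - 2))
    (hlam : lam = (p / (m - (p - 1))) ^ (p - 1) * (N - m * p / (m - (p - 1)))) :
    (∀ r ∈ Ioo (0:ℝ) 1,
      (HasDerivAt (fun s : ℝ => s ^ (-a) - 1) (-a * r ^ (-a - 1)) r ∧
       HasDerivAt (fun s : ℝ => s ^ (N - 1) * (a * s ^ (-a - 1)) ^ (p - 1))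
         (r ^ (N - 1) * lam * (1 + (r ^ (-a) - 1)) ^ m) r)) ∧
    (1 : ℝ) ^ (-a) - 1 = 0 := by
  have hp0 : (0:ℝ) < p := by linarith
  have hp1 : (0:ℝ) < p - 1 := by linarith
  have hfrac : 0 < 4 * p / (p - 1) := by positivity
  have hN1 : (1:ℝ) < N := by linarith
  set s0 := Real.sqrt ((N - 1) / (p - 1)) with hs0
  have hs0nn : 0 ≤ s0 := Real.sqrt_nonneg _
  have hs0sq : s0 ^ 2 = (N - 1) / (p - 1) :=
    Real.sq_sqrt (div_nonneg (by linarith) (by linarith))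
  have hs2 : Real.sqrt ((p - 1) * (N - 1)) = (p - 1) * s0 := by
    rw [show (p - 1) * (N - 1) = (p - 1) ^ 2 * ((N - 1) / (p - 1)) by
      field_simp]
    rw [Real.sqrt_mul (by positivity), Real.sqrt_sq hp1.le]
  -- positivity of the denominator D = N - 2 s0 - p - 2
  have ht : (N - p - 2) * (p - 1) > 2 * p + 2 := by
    have h : N - p > 4 * p / (p - 1) := by linarith
    have h2 : (N - p) * (p - 1) > 4 * p := by
      calc (N - p) * (p - 1) > (4 * p / (p - 1)) * (p - 1) := by
            exact mul_lt_mul_of_pos_right h hp1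
        _ = 4 * p := by field_simp
    nlinarith
  have htpos : (0:ℝ) < N - p - 2 := by nlinarith
  have hD : 0 < N - 2 * s0 - p - 2 := by
    have key : 4 * s0 ^ 2 < (N - p - 2) ^ 2 := by
      rw [hs0sq, mul_div_assoc', div_lt_iff₀ hp1]
      nlinarith
    nlinarith
  have hapos : 0 < a := by rw [ha]; positivity
  -- key algebraic identity: a * m = (p-1) * a + p
  have ham : a * m = (p - 1) * a + p := by
    rw [hm, ha, hs2]
    field_simp
    ring
  have hmp : m - (p - 1) = p / a := by
    rw [eq_div_iff hapos.ne']
    nlinarith [ham]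
  have hpa : p / (m - (p - 1)) = a := by
    rw [hmp]
    field_simp
  have hlam' : lam = a ^ (p - 1) * (N - a * m) := by
    rw [hlam, mul_div_assoc, hpa]
    ring
  constructor
  · intro r hr
    obtain ⟨hr0, hr1⟩ := hr
    constructor
    · have h1 := Real.hasDerivAt_rpow_const (x := r) (p := -a) (Or.inl hr0.ne')
      simpa using h1.sub_const 1
    · set c : ℝ := N - 1 + (-a - 1) * (p - 1) with hc
      have hg : HasDerivAt (fun s : ℝ => a ^ (p - 1) * s ^ c)
          (a ^ (p - 1) * (c * r ^ (c - 1))) r :=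
        (Real.hasDerivAt_rpow_const (x := r) (p := c) (Or.inl hr0.ne')).const_mul _
      have heq : (fun s : ℝ => s ^ (N - 1) * (a * s ^ (-a - 1)) ^ (p - 1))
          =ᶠ[nhds r] (fun s : ℝ => a ^ (p - 1) * s ^ c) := by
        filter_upwards [eventually_gt_nhds hr0] with s hs
        rw [Real.mul_rpow hapos.le (Real.rpow_nonneg hs.le _),
          ← Real.rpow_mul hs.le, hc, Real.rpow_add hs]
        ring
      have hder := hg.congr_of_eventuallyEq heq
      refine hder.congr_deriv ?_; symm
      have h1 : (1:ℝ) + (r ^ (-a) - 1) = r ^ (-a) := by ring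
      have hcN : c = N - a * m := by rw [hc]; linear_combination ham
      have hr' : r ^ (N - 1) * r ^ (-a * m) = r ^ (c - 1) := by
        rw [← Real.rpow_add hr0]; congr 1; rw [hcN]; ring
      rw [h1, ← Real.rpow_mul hr0.le]
      calc r ^ (N - 1) * lam * r ^ (-a * m)
          = lam * (r ^ (N - 1) * r ^ (-a * m)) := by ring
        _ = a ^ (p - 1) * (N - a * m) * r ^ (c - 1) := by rw [hr', hlam']
        _ = a ^ (p - 1) * (c * r ^ (c - 1)) := by rw [hcN]; ring
  · simp
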